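/- Let ε > 0 and f : (0,ε) → ℝ be continuous. If for every zero-one sequence {a_n}_{n∈ω} with infinitely many ones, the limit lim_{n→∞} f(∑_{k=n}^∞ a_k/2^k) exists and equals 0, then lim_{x→0⁺} f(x) = 0. -/

import Mathlib

open Filter

private lemma bits_sum' : ∀ L N : ℕ, N < 2^L →
    ∑ i ∈ Finset.range L, (if Nat.testBit N i then 2^i else 0) = N := by
  intro L
  induction L with
  | zero => intro N hN; interval_cases N; simp
  | succ L ih =>
    intro N hN
    rw [Finset.sum_range_succ']
    have h1 : ∀ i, (if Nat.testBit N (i+1) then 2^(i+1) else 0)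
        = 2 * (if Nat.testBit (N/2) i then 2^i else 0) := by
      intro i; rw [Nat.testBit_succ]; split <;> ring
    simp only [h1, ← Finset.mul_sum]
    rw [ih (N/2) (by rw [pow_succ] at hN; omega)]
    rw [Nat.testBit_zero]
    rcases Nat.even_or_odd N with h | h <;>
      simp [Nat.even_iff, Nat.odd_iff] at h <;> simp [h] <;> omega

private lemma bits_sum (L N : ℕ) (hN : N < 2^L) :
    ∑ i ∈ Finset.range L, (if Nat.testBit N i then (2:ℝ)^i else 0) = N := by
  have := bits_sum' L N hN
  have h2 : ((∑ i ∈ Finset.range L, (if Nat.testBit N i then 2^i else 0) : ℕ) : ℝ) = N := by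
    exact_mod_cast congrArg (Nat.cast : ℕ → ℝ) this
  rw [← h2]
  push_cast
  exact Finset.sum_congr rfl fun i _ => by split <;> simp

/-- If `f` is continuous on `(0,ε)` and for every zero-one sequence with infinitely
many ones the values of `f` along the tail sums tend to `0`, then `f(x) → 0` as `x → 0⁺`. -/
theorem stmt5 (ε : ℝ) (hε : 0 < ε) (f : ℝ → ℝ) (hf : ContinuousOn f (Set.Ioo 0 ε))
    (h : ∀ a : ℕ → Bool, {k : ℕ | a k = true}.Infinite →
      Tendsto (fun n : ℕ => f (∑' k : ℕ, (if a (n + k) then (1 : ℝ) else 0) / 2 ^ (n + k)))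
        atTop (nhds 0)) :
    Tendsto f (nhdsWithin 0 (Set.Ioi 0)) (nhds 0) := by
  classical
  by_contra hcon
  rw [Metric.tendsto_nhdsWithin_nhds] at hcon
  push_neg at hcon
  obtain ⟨δ, hδ, hbad⟩ := hcon
  -- continuity modulus
  have hcont : ∀ x ∈ Set.Ioo (0:ℝ) ε, ∀ η > (0:ℝ), ∃ θ > (0:ℝ),
      ∀ y, |y - x| < θ → |f y - f x| < η := by
    intro x hx η hη
    have hca : ContinuousAt f x := hf.continuousAt (Ioo_mem_nhds hx.1 hx.2)
    rw [Metric.continuousAt_iff] at hca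
    obtain ⟨θ, hθ, H⟩ := hca η hη
    exact ⟨θ, hθ, fun y hy => H (by rwa [Real.dist_eq])⟩
  -- Lemma A: dyadic points with big |f| arbitrarily close to 0
  have lemA : ∀ r : ℝ, 0 < r → ∃ x : ℝ, ∃ m N : ℕ,
      0 < x ∧ x < r ∧ x < ε ∧ x * 2^m = (N:ℝ) ∧ δ/2 < |f x| := by
    intro r hr
    obtain ⟨y, hy0, hyd, hyf⟩ := hbad (min r ε) (lt_min hr hε)
    rw [Real.dist_eq, sub_zero] at hyd
    rw [Real.dist_eq, sub_zero] at hyf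
    have hy0' : 0 < y := hy0
    have hyr : y < r := lt_of_lt_of_le (lt_of_abs_lt hyd) (min_le_left _ _)
    have hyε : y < ε := lt_of_lt_of_le (lt_of_abs_lt hyd) (min_le_right _ _)
    obtain ⟨θ, hθ, H⟩ := hcont y ⟨hy0', hyε⟩ (δ/2) (half_pos hδ)
    obtain ⟨n, hn⟩ : ∃ n : ℕ, ((1:ℝ)/2)^n < min θ (min (r - y) (ε - y)) :=
      exists_pow_lt_of_lt_one (lt_min hθ (lt_min (by linarith) (by linarith))) (by norm_num)
    set x : ℝ := ((⌈y * 2^n⌉.toNat : ℝ)) / 2^n with hxdef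
    have hpow : (0:ℝ) < 2^n := by positivity
    have hceil0 : (0:ℤ) ≤ ⌈y * 2^n⌉ := Int.ceil_nonneg (by positivity)
    have hcast : ((⌈y * 2^n⌉.toNat : ℝ)) = ((⌈y * 2^n⌉ : ℤ) : ℝ) := by
      exact_mod_cast congrArg (Int.cast : ℤ → ℝ) (Int.toNat_of_nonneg hceil0)
    have hyx : y ≤ x := by
      rw [hxdef, hcast, le_div_iff₀ hpow]
      exact Int.le_ceil _
    have hxy : x < y + ((1:ℝ)/2)^n := by
      rw [hxdef, hcast, div_lt_iff₀ hpow]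
      calc ((⌈y * 2^n⌉ : ℤ) : ℝ) < y * 2^n + 1 := Int.ceil_lt_add_one _
        _ = (y + ((1:ℝ)/2)^n) * 2^n := by
            rw [add_mul]; congr 1
            rw [div_pow, one_pow, div_mul_cancel₀]
            positivity
    have hxθ : |x - y| < θ := by
      rw [abs_lt]
      constructor <;> nlinarith [lt_of_lt_of_le hn (min_le_left _ _)]
    have hfy := H x hxθ
    refine ⟨x, n, ⌈y * 2^n⌉.toNat, lt_of_lt_of_le hy0' hyx, ?_, ?_, ?_, ?_⟩
    · nlinarith [lt_of_lt_of_le hn (le_trans (min_le_right _ _) (min_le_left _ _))]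
    · nlinarith [lt_of_lt_of_le hn (le_trans (min_le_right _ _) (min_le_right _ _))]
    · rw [hxdef, div_mul_cancel₀]; positivity
    · have h1 : |f y| - |f x| ≤ |f y - f x| := abs_sub_abs_le_abs_sub _ _
      rw [abs_sub_comm] at hfy
      linarith
  -- Invariant and step relation
  set Inv : ℝ × ℕ × ℕ → Prop := fun p =>
    0 < p.1 ∧ p.1 < ε ∧ p.1 * 2 ^ p.2.2 < 1 ∧ (∃ N : ℕ, p.1 * 2 ^ p.2.1 = (N:ℝ)) ∧
      δ/2 < |f p.1| with hInvdef
  set Rel : ℝ × ℕ × ℕ → ℝ × ℕ × ℕ → Prop := fun p q =>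
    p.2.1 < q.2.2 ∧ p.2.2 < q.2.2 ∧
      (∀ y : ℝ, p.1 ≤ y → y ≤ p.1 + 4 * ((1:ℝ)/2) ^ q.2.2 → δ/4 < |f y|) with hReldef
  have key : ∀ p : ℝ × ℕ × ℕ, ∃ q : ℝ × ℕ × ℕ, Inv p → (Inv q ∧ Rel p q) := by
    rintro ⟨x, m, n⟩
    by_cases hp : Inv (x, m, n)
    swap
    · exact ⟨(x, m, n), fun hc => absurd hc hp⟩
    obtain ⟨hx0, hxε, hxn, ⟨N, hNx⟩, hfx⟩ := hp
    obtain ⟨θ, hθ, H⟩ := hcont x ⟨hx0, hxε⟩ (δ/4) (by positivity)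
    obtain ⟨k, hk⟩ : ∃ k : ℕ, ((1:ℝ)/2)^k < θ/4 :=
      exists_pow_lt_of_lt_one (by positivity) (by norm_num)
    set n' : ℕ := max k (max m n) + 1 with hn'def
    have hpown' : ((1:ℝ)/2)^n' ≤ ((1:ℝ)/2)^k := by
      apply pow_le_pow_of_le_one (by norm_num) (by norm_num)
      omega
    have hmn' : m < n' := by omega
    have hnn' : n < n' := by omega
    obtain ⟨x', m', N', hx'0, hx'r, hx'ε, hx'd, hfx'⟩ := lemA (((1:ℝ)/2)^n') (by positivity)
    refine ⟨(x', m', n'), fun _ => ⟨⟨hx'0, hx'ε, ?_, ⟨N', hx'd⟩, hfx'⟩, hmn', hnn', ?_⟩⟩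
    · have : ((1:ℝ)/2)^n' * 2^n' = 1 := by
        rw [div_pow, one_pow, div_mul_cancel₀]
        positivity
      nlinarith [pow_pos (show (0:ℝ) < 2 by norm_num) n']
    · intro y h1 h2
      have hyx : |y - x| < θ := by
        rw [abs_lt]
        constructor <;> nlinarith
      have hfyx := H y hyx
      have h3 : |f x| - |f y| ≤ |f x - f y| := abs_sub_abs_le_abs_sub _ _
      rw [abs_sub_comm] at hfyx
      linarith
  choose step hstep using key
  -- initial point
  obtain ⟨x0, m0, N0, hx00, hx01, hx0ε, hx0d, hfx0⟩ := lemA 1 one_pos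
  set p0 : ℝ × ℕ × ℕ := (x0, m0, 0) with hp0def
  have hInv0 : Inv p0 := ⟨hx00, hx0ε, by show x0 * 2 ^ 0 < 1; simpa using hx01, ⟨N0, hx0d⟩, hfx0⟩
  set seq : ℕ → ℝ × ℕ × ℕ := fun j => step^[j] p0 with hseqdef
  have hseqsucc : ∀ j, seq (j+1) = step (seq j) := fun j =>
    Function.iterate_succ_apply' step j p0
  have hInvseq : ∀ j, Inv (seq j) := by
    intro j
    induction j with
    | zero => exact hInv0
    | succ j ih => rw [hseqsucc]; exact (hstep _ ih).1
  have hRelseq : ∀ j, Rel (seq j) (seq (j+1)) := by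
    intro j; rw [hseqsucc]; exact (hstep _ (hInvseq j)).2
  set X : ℕ → ℝ := fun j => (seq j).1 with hXdef
  set M : ℕ → ℕ := fun j => (seq j).2.1 with hMdef
  set Nn : ℕ → ℕ := fun j => (seq j).2.2 with hNndef
  have hXpos : ∀ j, 0 < X j := fun j => (hInvseq j).1
  have hXn : ∀ j, X j * 2 ^ (Nn j) < 1 := fun j => (hInvseq j).2.2.1
  have hNNex : ∀ j, ∃ N : ℕ, X j * 2 ^ (M j) = (N:ℝ) := fun j => (hInvseq j).2.2.2.1
  choose NN hNN using hNNex
  have hMn : ∀ j, M j < Nn (j+1) := fun j => (hRelseq j).1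
  have hnn : ∀ j, Nn j < Nn (j+1) := fun j => (hRelseq j).2.1
  have hprop : ∀ j, ∀ y : ℝ, X j ≤ y → y ≤ X j + 4 * ((1:ℝ)/2) ^ (Nn (j+1)) → δ/4 < |f y| :=
    fun j => (hRelseq j).2.2
  have hmono : StrictMono Nn := strictMono_nat_of_lt_succ hnn
  have hNNpos : ∀ j, 1 ≤ NN j := by
    intro j
    rcases Nat.eq_zero_or_pos (NN j) with h0 | h1
    · exfalso
      have h2 := hNN j
      rw [h0] at h2
      have h4 := hXpos j
      have h3 : (0:ℝ) < X j * 2 ^ (M j) := by positivity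
      rw [h2] at h3
      simp at h3
    · exact h1
  have hnm : ∀ j, Nn j < M j := by
    intro j
    have h1 : (1:ℝ) ≤ X j * 2 ^ (M j) := by
      rw [hNN j]; exact_mod_cast hNNpos j
    have h2 := hXn j
    have := hXpos j
    by_contra hc
    push_neg at hc
    have : (2:ℝ) ^ (M j) ≤ 2 ^ (Nn j) := by
      apply pow_le_pow_right₀ (by norm_num) hc
    nlinarith [pow_pos (show (0:ℝ) < 2 by norm_num) (M j),
      pow_pos (show (0:ℝ) < 2 by norm_num) (Nn j)]
  have hNlt : ∀ j, NN j < 2 ^ (M j - Nn j) := by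
    intro j
    have hle : Nn j ≤ M j := (hnm j).le
    have h1 : (NN j : ℝ) * 2 ^ (Nn j) < 2 ^ (M j) := by
      rw [← hNN j]
      calc X j * 2 ^ (M j) * 2 ^ (Nn j) = (X j * 2 ^ (Nn j)) * 2 ^ (M j) := by ring
        _ < 1 * 2 ^ (M j) := by
            apply mul_lt_mul_of_pos_right (hXn j) (by positivity)
        _ = 2 ^ (M j) := one_mul _
    have h2 : (2:ℝ) ^ (M j - Nn j) * 2 ^ (Nn j) = 2 ^ (M j) := by
      rw [← pow_add]; congr 1; omega
    have h3 : (NN j : ℝ) < 2 ^ (M j - Nn j) := by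
      rw [← h2] at h1
      exact lt_of_mul_lt_mul_right h1 (by positivity)
    exact_mod_cast h3
  -- the zero-one sequence
  set a : ℕ → Bool := fun k =>
    decide (∃ j, Nn j < k ∧ k ≤ M j ∧ Nat.testBit (NN j) (M j - k) = true) with hadef
  have char : ∀ j k, Nn j ≤ k → k < Nn (j+1) →
      (a k = true ↔ (Nn j < k ∧ k ≤ M j ∧ Nat.testBit (NN j) (M j - k) = true)) := by
    intro j k hk1 hk2
    rw [hadef]
    simp only [decide_eq_true_eq]
    constructor
    · rintro ⟨j', hj1, hj2, hj3⟩
      rcases lt_trichotomy j' j with hlt | rfl | hgt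
      · exfalso
        have : M j' < Nn (j'+1) := hMn j'
        have : Nn (j'+1) ≤ Nn j := hmono.le_iff_le.mpr (by omega)
        omega
      · exact ⟨hj1, hj2, hj3⟩
      · exfalso
        have : Nn (j+1) ≤ Nn j' := hmono.le_iff_le.mpr (by omega)
        omega
    · intro hp
      exact ⟨j, hp⟩
  set g : ℕ → ℝ := fun k => (if a k then (1:ℝ) else 0) / 2 ^ k with hgdef
  have hg0 : ∀ k, 0 ≤ g k := by
    intro k; rw [hgdef]; positivity
  have hgle : ∀ k, g k ≤ ((1:ℝ)/2)^k := by
    intro k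
    rw [hgdef]
    simp only [div_pow, one_pow]
    apply div_le_div_of_nonneg_right ?_ (by positivity)
    split <;> norm_num
  have hsum : Summable g :=
    Summable.of_nonneg_of_le hg0 hgle summable_geometric_two
  set t : ℕ → ℝ := fun N => ∑' k, g (N + k) with htdef
  have ht_shift : ∀ N, t N = ∑' k, g (k + N) := by
    intro N
    exact tsum_congr fun k => by rw [add_comm]
  have ht_eq : ∀ N, ∑ k ∈ Finset.range N, g k + t N = ∑' k, g k := by
    intro N
    rw [ht_shift]
    exact Summable.sum_add_tsum_nat_add N hsum
  have ht_nonneg : ∀ N, 0 ≤ t N := fun N => tsum_nonneg fun k => hg0 _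
  have ht_ub : ∀ N, t N ≤ 2 * ((1:ℝ)/2) ^ N := by
    intro N
    have hsum2 : Summable (fun k => ((1:ℝ)/2) ^ (N + k)) := by
      simp only [pow_add]
      exact (summable_geometric_two).mul_left _
    have hs1 : Summable fun k => g (N + k) := by
      have h0 : Summable fun k => g (k + N) := (summable_nat_add_iff N).mpr hsum
      exact h0.congr fun k => by rw [add_comm]
    have h1 : t N ≤ ∑' k, ((1:ℝ)/2) ^ (N + k) :=
      Summable.tsum_le_tsum (fun k => hgle _) hs1 hsum2
    have h2 : ∑' k, ((1:ℝ)/2) ^ (N + k) = ((1:ℝ)/2) ^ N * 2 := by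
      simp only [pow_add]
      rw [tsum_mul_left, tsum_geometric_two]
    rw [h2] at h1
    linarith
  have hsplit : ∀ A B, A ≤ B → t A = ∑ k ∈ Finset.Ico A B, g k + t B := by
    intro A B hAB
    have h1 := ht_eq A
    have h2 := ht_eq B
    rw [Finset.sum_Ico_eq_sub _ hAB]
    linarith
  -- block sums
  have hblock : ∀ j, ∑ k ∈ Finset.Ico (Nn j) (Nn (j+1)), g k = X j := by
    intro j
    have hsub : Finset.Ioc (Nn j) (M j) ⊆ Finset.Ico (Nn j) (Nn (j+1)) := by
      intro k hk
      rw [Finset.mem_Ioc] at hk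
      rw [Finset.mem_Ico]
      have := hMn j
      omega
    rw [← Finset.sum_subset hsub]
    · have hcg : ∀ k ∈ Finset.Ioc (Nn j) (M j),
          g k = (if Nat.testBit (NN j) (M j - k) then (1:ℝ) else 0) / 2 ^ k := by
        intro k hk
        rw [Finset.mem_Ioc] at hk
        have hk2 : k < Nn (j+1) := by have := hMn j; omega
        have hch := char j k hk.1.le hk2
        rw [hgdef]
        by_cases hb : Nat.testBit (NN j) (M j - k) = true
        · have : a k = true := hch.mpr ⟨hk.1, hk.2, hb⟩
          simp [this, hb]
        · have : ¬ (a k = true) := fun hc => hb (hch.mp hc).2.2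
          simp only [Bool.not_eq_true] at this
          simp only [Bool.not_eq_true] at hb
          simp [this, hb]
      rw [Finset.sum_congr rfl hcg]
      -- reindex k ↦ M j - k
      have hre : ∑ k ∈ Finset.Ioc (Nn j) (M j),
          (if Nat.testBit (NN j) (M j - k) then (1:ℝ) else 0) / 2 ^ k
          = ∑ i ∈ Finset.range (M j - Nn j),
          (if Nat.testBit (NN j) i then (1:ℝ) else 0) / 2 ^ (M j - i) := by
        apply Finset.sum_nbij' (i := fun k => M j - k) (j := fun i => M j - i)
        · intro k hk
          rw [Finset.mem_Ioc] at hk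
          rw [Finset.mem_range]
          omega
        · intro i hi
          rw [Finset.mem_range] at hi
          rw [Finset.mem_Ioc]
          omega
        · intro k hk
          rw [Finset.mem_Ioc] at hk
          omega
        · intro i hi
          rw [Finset.mem_range] at hi
          omega
        · intro k hk
          rw [Finset.mem_Ioc] at hk
          congr 2
          omega
      rw [hre]
      have hterm : ∀ i ∈ Finset.range (M j - Nn j),
          (if Nat.testBit (NN j) i then (1:ℝ) else 0) / 2 ^ (M j - i)
          = (if Nat.testBit (NN j) i then (2:ℝ)^i else 0) / 2 ^ (M j) := by
        intro i hi
        rw [Finset.mem_range] at hi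
        have hiM : i ≤ M j := by omega
        have hp : (2:ℝ) ^ (M j - i) * 2 ^ i = 2 ^ (M j) := by
          rw [← pow_add]; congr 1; omega
        split
        · rw [div_eq_div_iff (by positivity) (by positivity), one_mul, mul_comm, hp]
        · simp
      rw [Finset.sum_congr rfl hterm]
      rw [← Finset.sum_div]
      rw [bits_sum (M j - Nn j) (NN j) (hNlt j)]
      rw [eq_comm, eq_div_iff (by positivity), ← hNN j]
    · intro k hk hk2
      rw [Finset.mem_Ico] at hk
      rw [Finset.mem_Ioc] at hk2
      push_neg at hk2
      have hch := char j k hk.1 hk.2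
      have ha : a k = false := by
        rw [← Bool.not_eq_true]
        intro hc
        obtain ⟨h1, h2, _⟩ := hch.mp hc
        exact absurd (hk2 h1) (by omega)
      rw [hgdef]
      simp [ha]
  -- positivity of tails
  have ht_pos : ∀ A, 0 < t A := by
    intro A
    have hA : A ≤ Nn A := hmono.le_apply
    have h1 : t (Nn A) = X A + t (Nn (A+1)) := by
      rw [hsplit (Nn A) (Nn (A+1)) (hnn A).le, hblock A]
    have h2 : t A = ∑ k ∈ Finset.Ico A (Nn A), g k + t (Nn A) := hsplit A (Nn A) hA
    have h3 : 0 ≤ ∑ k ∈ Finset.Ico A (Nn A), g k :=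
      Finset.sum_nonneg fun k _ => hg0 k
    have := ht_nonneg (Nn (A+1))
    have := hXpos A
    linarith
  -- infinitely many ones
  have hinf : {k : ℕ | a k = true}.Infinite := by
    by_contra hfin
    rw [Set.not_infinite] at hfin
    obtain ⟨B, hB⟩ := hfin.bddAbove
    have hzero : ∀ k, a (B + 1 + k) = false := by
      intro k
      rw [← Bool.not_eq_true]
      intro hc
      have := hB hc
      omega
    have : t (B+1) = 0 := by
      rw [htdef]
      have : ∀ k, g (B + 1 + k) = 0 := by
        intro k
        rw [hgdef]
        simp [hzero k]
      simp only [this]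
      exact tsum_zero
    have := ht_pos (B+1)
    linarith
  -- final contradiction
  have H := h a hinf
  have Hform : (fun n : ℕ => f (∑' k : ℕ, (if a (n + k) then (1 : ℝ) else 0) / 2 ^ (n + k)))
      = fun n => f (t n) := rfl
  rw [Hform] at H
  have H2 : Tendsto (fun j => f (t (Nn j))) atTop (nhds 0) := H.comp hmono.tendsto_atTop
  rw [Metric.tendsto_atTop] at H2
  obtain ⟨j0, hj0⟩ := H2 (δ/4) (by positivity)
  have hd := hj0 j0 le_rfl
  rw [Real.dist_eq, sub_zero] at hd
  have h1 : t (Nn j0) = X j0 + t (Nn (j0+1)) := by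
    rw [hsplit (Nn j0) (Nn (j0+1)) (hnn j0).le, hblock j0]
  have h2 : X j0 ≤ t (Nn j0) := by
    have := ht_nonneg (Nn (j0+1)); linarith
  have h3 : t (Nn j0) ≤ X j0 + 4 * ((1:ℝ)/2) ^ (Nn (j0+1)) := by
    have := ht_ub (Nn (j0+1))
    have hp : (0:ℝ) < ((1:ℝ)/2) ^ (Nn (j0+1)) := by positivity
    linarith
  have := hprop j0 (t (Nn j0)) h2 h3
  linarith
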